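/- For any real numbers α, β, γ, the two-qubit unitary U = exp(i(α σ_x ⊗ σ_x + β σ_y ⊗ σ_y + γ σ_z ⊗ σ_z)) has equal entangling and disentangling power: E↑(U) = E↓(U). -/

import Mathlib

open scoped BigOperators Matrix

/-- Von Neumann entropy in bits: `S(ρ) = -∑ᵢ λᵢ log₂ λᵢ` over the eigenvalues of `ρ`
(interpreted as `0` if `ρ` is not Hermitian). -/
noncomputable def vnEntropy {n : Type*} [Fintype n] [DecidableEq n]
    (ρ : Matrix n n ℂ) : ℝ :=
  if h : ρ.IsHermitian then -∑ i, h.eigenvalues i * Real.logb 2 (h.eigenvalues i) else 0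

/-- Reduced density matrix of a pure state `ψ` on a bipartite system, obtained by
tracing out the second factor. -/
noncomputable def redDM {m p : Type*} [Fintype m] [Fintype p]
    (ψ : m × p → ℂ) : Matrix m m ℂ :=
  Matrix.of fun x y => ∑ z, ψ (x, z) * star (ψ (y, z))

/-- Entanglement across the `aA : Bb` cut of a pure state of `a, A, B, b`:
the entropy of the reduced state on `aA`. -/
noncomputable def entE {a A B b : ℕ}
    (ψ : (Fin a × Fin A) × (Fin B × Fin b) → ℂ) : ℝ :=
  vnEntropy (redDM ψ)

/-- The action of `I_a ⊗ U ⊗ I_b` on a state of `a, A, B, b`. -/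
noncomputable def applyU {a A B b : ℕ}
    (U : Matrix (Fin A × Fin B) (Fin A × Fin B) ℂ)
    (ψ : (Fin a × Fin A) × (Fin B × Fin b) → ℂ) :
    (Fin a × Fin A) × (Fin B × Fin b) → ℂ :=
  fun x => ∑ p : Fin A × Fin B, U (x.1.2, x.2.1) p * ψ ((x.1.1, p.1), (p.2, x.2.2))

/-- `ψ` is a unit vector. -/
def IsUnitVec {d : Type*} [Fintype d] (ψ : d → ℂ) : Prop :=
  ∑ x, ‖ψ x‖ ^ 2 = 1

/-- Entangling power `E^↑(U)`: the supremum over ancilla dimensions `a, b ≥ 1` and unit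
input states of the entanglement increase produced by `I_a ⊗ U ⊗ I_b`. -/
noncomputable def entPower {A B : ℕ}
    (U : Matrix (Fin A × Fin B) (Fin A × Fin B) ℂ) : ℝ :=
  sSup {r : ℝ | ∃ (a b : ℕ), 0 < a ∧ 0 < b ∧
    ∃ ψ : (Fin a × Fin A) × (Fin B × Fin b) → ℂ, IsUnitVec ψ ∧
      r = entE (applyU U ψ) - entE ψ}

/-- Disentangling power `E^↓(U) = E^↑(U†)`. -/
noncomputable def disPower {A B : ℕ}
    (U : Matrix (Fin A × Fin B) (Fin A × Fin B) ℂ) : ℝ :=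
  entPower Uᴴ

open Kronecker

/-- The Pauli matrix `σ_x`. -/
def sigmaX : Matrix (Fin 2) (Fin 2) ℂ := !![0, 1; 1, 0]

/-- The Pauli matrix `σ_y`. -/
def sigmaY : Matrix (Fin 2) (Fin 2) ℂ := !![0, -Complex.I; Complex.I, 0]

/-- The Pauli matrix `σ_z`. -/
def sigmaZ : Matrix (Fin 2) (Fin 2) ℂ := !![1, 0; 0, -1]

/-- The two-qubit gate `exp(i(α σ_x⊗σ_x + β σ_y⊗σ_y + γ σ_z⊗σ_z))`. -/
noncomputable def twoQubitGate (α β γ : ℝ) :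
    Matrix (Fin 2 × Fin 2) (Fin 2 × Fin 2) ℂ :=
  NormedSpace.exp (Complex.I • ((α : ℂ) • (sigmaX ⊗ₖ sigmaX) +
    (β : ℂ) • (sigmaY ⊗ₖ sigmaY) + (γ : ℂ) • (sigmaZ ⊗ₖ sigmaZ)))

section AuxProof

open Matrix Polynomial

private lemma multiset_prod_eq' {n : Type*} [Fintype n] (g : n → ℝ) :
    (Finset.univ.val.map g).prod = ∏ i, g i := rfl

private lemma multiset_sum_eq' {n : Type*} [Fintype n] (g : n → ℝ) :
    (Finset.univ.val.map g).sum = ∑ i, g i := rfl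

private lemma eig_det' {n : Type*} [Fintype n] [DecidableEq n]
    (A : Matrix n n ℂ) (hA : A.IsHermitian) (c : ℂ) :
    det (c • (1 : Matrix n n ℂ) - A) = ∏ i, (c - (hA.eigenvalues i : ℂ)) := by
  set V : Matrix n n ℂ := (hA.eigenvectorUnitary : Matrix n n ℂ) with hV
  have hVU : V * star V = 1 := (Matrix.mem_unitaryGroup_iff).mp hA.eigenvectorUnitary.2
  have key : c • (1 : Matrix n n ℂ) - A
      = V * (c • (1 : Matrix n n ℂ) - diagonal (RCLike.ofReal ∘ hA.eigenvalues)) * star V := by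
    rw [Matrix.mul_sub, Matrix.sub_mul, Matrix.mul_smul, Matrix.smul_mul, Matrix.mul_one, hVU]
    exact congrArg (c • (1 : Matrix n n ℂ) - ·) hA.spectral_theorem
  rw [key, det_mul_right_comm, hVU, Matrix.one_mul]
  have : c • (1 : Matrix n n ℂ) - diagonal (RCLike.ofReal ∘ hA.eigenvalues)
      = diagonal (fun i => c - (hA.eigenvalues i : ℂ)) := by
    ext i j
    by_cases hij : i = j <;>
      simp [Matrix.sub_apply, Matrix.smul_apply, Matrix.one_apply, Matrix.diagonal_apply, hij]
  rw [this, det_diagonal]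

private lemma eig_multiset_eq' {n : Type*} [Fintype n] [DecidableEq n]
    (A B : Matrix n n ℂ) (hA : A.IsHermitian) (hB : B.IsHermitian)
    (h : ∀ t : ℝ, det ((t : ℂ) • (1 : Matrix n n ℂ) - A)
        = det ((t : ℂ) • (1 : Matrix n n ℂ) - B)) :
    Finset.univ.val.map hA.eigenvalues = Finset.univ.val.map hB.eigenvalues := by
  have hpoly : ((Finset.univ.val.map hA.eigenvalues).map (fun a => (X : ℝ[X]) - C a)).prod
      = ((Finset.univ.val.map hB.eigenvalues).map (fun a => (X : ℝ[X]) - C a)).prod := by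
    apply Polynomial.funext
    intro t
    have hc := h t
    rw [eig_det' A hA, eig_det' B hB] at hc
    have hre : (∏ i, (t - hA.eigenvalues i)) = ∏ i, (t - hB.eigenvalues i) := by
      have : ((∏ i, (t - hA.eigenvalues i) : ℝ) : ℂ)
          = ((∏ i, (t - hB.eigenvalues i) : ℝ) : ℂ) := by push_cast; exact hc
      exact_mod_cast this
    rw [eval_multiset_prod, eval_multiset_prod]
    simp only [Multiset.map_map, Function.comp, eval_sub, eval_X, eval_C]
    rw [multiset_prod_eq', multiset_prod_eq']
    exact hre
  have := congrArg Polynomial.roots hpoly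
  rwa [roots_multiset_prod_X_sub_C, roots_multiset_prod_X_sub_C] at this

private lemma vnEntropy_eq_of_det' {n : Type*} [Fintype n] [DecidableEq n]
    (A B : Matrix n n ℂ)
    (h : ∀ t : ℝ, det ((t : ℂ) • (1 : Matrix n n ℂ) - A)
        = det ((t : ℂ) • (1 : Matrix n n ℂ) - B))
    (hiff : A.IsHermitian ↔ B.IsHermitian) :
    vnEntropy A = vnEntropy B := by
  unfold vnEntropy
  by_cases hA : A.IsHermitian
  · have hB : B.IsHermitian := hiff.mp hA
    rw [dif_pos hA, dif_pos hB]
    have hm := eig_multiset_eq' A B hA hB h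
    have key : ∑ i, hA.eigenvalues i * Real.logb 2 (hA.eigenvalues i)
        = ∑ i, hB.eigenvalues i * Real.logb 2 (hB.eigenvalues i) := by
      have := congrArg (fun m : Multiset ℝ => (m.map (fun x => x * Real.logb 2 x)).sum) hm
      simp only [Multiset.map_map, Function.comp] at this
      rw [multiset_sum_eq', multiset_sum_eq'] at this
      exact this
    rw [key]
  · rw [dif_neg hA, dif_neg (fun hB => hA (hiff.mpr hB))]

/-- entropy of a transpose. -/
private lemma vnEntropy_transpose' {n : Type*} [Fintype n] [DecidableEq n]
    (A : Matrix n n ℂ) : vnEntropy Aᵀ = vnEntropy A := by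
  apply vnEntropy_eq_of_det'
  · intro t
    rw [← Matrix.det_transpose ((t : ℂ) • (1 : Matrix n n ℂ) - A)]
    congr 1
    rw [Matrix.transpose_sub, Matrix.transpose_smul, Matrix.transpose_one]
  · constructor
    · intro h
      have := h.transpose
      simpa using this
    · exact fun h => h.transpose

private lemma redDM_conj' {m p : Type*} [Fintype m] [Fintype p] (ψ : m × p → ℂ) :
    redDM (fun x => star (ψ x)) = (redDM ψ)ᵀ := by
  ext x y
  simp only [redDM, Matrix.of_apply, Matrix.transpose_apply, star_star]
  exact Finset.sum_congr rfl fun z _ => mul_comm _ _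

private lemma entE_conj' {a A B b : ℕ} (ψ : (Fin a × Fin A) × (Fin B × Fin b) → ℂ) :
    entE (fun x => star (ψ x)) = entE ψ := by
  unfold entE
  rw [redDM_conj', vnEntropy_transpose']

private lemma isUnitVec_conj' {d : Type*} [Fintype d] (ψ : d → ℂ) :
    IsUnitVec (fun x => star (ψ x)) ↔ IsUnitVec ψ := by
  unfold IsUnitVec
  simp [norm_star]

private lemma applyU_map_star' {a A B b : ℕ}
    (U : Matrix (Fin A × Fin B) (Fin A × Fin B) ℂ)
    (ψ : (Fin a × Fin A) × (Fin B × Fin b) → ℂ) :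
    applyU (U.map (starRingEnd ℂ)) (fun x => star (ψ x))
      = fun x => star (applyU U ψ x) := by
  funext x
  simp only [applyU, Matrix.map_apply, star_sum, star_mul']
  rfl

private lemma entPower_map_star_le' {A B : ℕ}
    (U : Matrix (Fin A × Fin B) (Fin A × Fin B) ℂ) :
    {r : ℝ | ∃ (a b : ℕ), 0 < a ∧ 0 < b ∧
      ∃ ψ : (Fin a × Fin A) × (Fin B × Fin b) → ℂ, IsUnitVec ψ ∧
        r = entE (applyU (U.map (starRingEnd ℂ)) ψ) - entE ψ} ⊆
    {r : ℝ | ∃ (a b : ℕ), 0 < a ∧ 0 < b ∧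
      ∃ ψ : (Fin a × Fin A) × (Fin B × Fin b) → ℂ, IsUnitVec ψ ∧
        r = entE (applyU U ψ) - entE ψ} := by
  rintro r ⟨a, b, ha, hb, ψ, hψ, hr⟩
  refine ⟨a, b, ha, hb, fun x => star (ψ x), (isUnitVec_conj' ψ).mpr hψ, ?_⟩
  have h1 : applyU (U.map (starRingEnd ℂ)) ψ
      = fun x => star (applyU U (fun y => star (ψ y)) x) := by
    have := applyU_map_star' U (fun y => star (ψ y))
    simpa [star_star] using this
  rw [hr, h1, entE_conj', entE_conj']

private lemma entPower_map_star' {A B : ℕ}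
    (U : Matrix (Fin A × Fin B) (Fin A × Fin B) ℂ) :
    entPower (U.map (starRingEnd ℂ)) = entPower U := by
  unfold entPower
  congr 1
  apply Set.Subset.antisymm
  · exact entPower_map_star_le' U
  · have h := entPower_map_star_le' (U.map (starRingEnd ℂ))
    have hmap : (U.map (starRingEnd ℂ)).map (starRingEnd ℂ) = U := by
      ext i j; simp [Matrix.map_apply]
    rwa [hmap] at h

private lemma twoQubitGate_transpose' (α β γ : ℝ) :
    (twoQubitGate α β γ)ᵀ = twoQubitGate α β γ := by
  unfold twoQubitGate
  rw [← Matrix.exp_transpose]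
  congr 1
  have hX : sigmaXᵀ = sigmaX := by
    ext i j; fin_cases i <;> fin_cases j <;> simp [sigmaX]
  have hY : sigmaYᵀ = -sigmaY := by
    ext i j; fin_cases i <;> fin_cases j <;> simp [sigmaY]
  have hZ : sigmaZᵀ = sigmaZ := by
    ext i j; fin_cases i <;> fin_cases j <;> simp [sigmaZ]
  have hXX : (sigmaX ⊗ₖ sigmaX)ᵀ = sigmaX ⊗ₖ sigmaX := by
    rw [← Matrix.kroneckerMap_transpose, hX]
  have hYY : (sigmaY ⊗ₖ sigmaY)ᵀ = sigmaY ⊗ₖ sigmaY := by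
    rw [← Matrix.kroneckerMap_transpose, hY]
    ext i j
    simp only [Matrix.kroneckerMap_apply, Matrix.neg_apply]
    ring
  have hZZ : (sigmaZ ⊗ₖ sigmaZ)ᵀ = sigmaZ ⊗ₖ sigmaZ := by
    rw [← Matrix.kroneckerMap_transpose, hZ]
  rw [Matrix.transpose_smul, Matrix.transpose_add, Matrix.transpose_add,
    Matrix.transpose_smul, Matrix.transpose_smul, Matrix.transpose_smul,
    hXX, hYY, hZZ]

end AuxProof

/-- Every two-qubit gate of the form
`exp(i(α σ_x⊗σ_x + β σ_y⊗σ_y + γ σ_z⊗σ_z))` has equal entangling and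
disentangling power. -/
theorem twoQubitGate_entPower_eq_disPower (α β γ : ℝ) :
    entPower (twoQubitGate α β γ) = disPower (twoQubitGate α β γ) := by
  unfold disPower
  have h : (twoQubitGate α β γ)ᴴ = (twoQubitGate α β γ).map (starRingEnd ℂ) := by
    ext i j
    rw [Matrix.conjTranspose_apply, Matrix.map_apply]
    conv_lhs => rw [← twoQubitGate_transpose' α β γ]
    rw [Matrix.transpose_apply]
    rfl
  rw [h, entPower_map_star']
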